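/- If L is a weakly dicomplemented lattice with x^△ = x^▽ for all x, then (L, ∧, ∨, ^△, 0, 1) is a Boolean algebra. Conversely, every Boolean algebra with complementation duplicated as both unary operations is a weakly dicomplemented lattice. -/
import Mathlib


/-- A weakly dicomplemented lattice with negation is a Boolean algebra
(a distributive bounded lattice in which `tri x` complements `x`); conversely,
every Boolean algebra with complementation duplicated as both unary operations
is a weakly dicomplemented lattice. -/
theorem stmt_14 :
    (∀ (L : Type) [Lattice L] [BoundedOrder L] (tri dtri : L → L),
      (∀ x : L, tri (tri x) ≤ x) →
      (∀ x y : L, x ≤ y → tri y ≤ tri x) →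
      (∀ x y : L, (x ⊓ y) ⊔ (x ⊓ tri y) = x) →
      (∀ x : L, x ≤ dtri (dtri x)) →
      (∀ x y : L, x ≤ y → dtri y ≤ dtri x) →
      (∀ x y : L, (x ⊔ y) ⊓ (x ⊔ dtri y) = x) →
      (∀ x : L, tri x = dtri x) →
      (∀ x y z : L, x ⊓ (y ⊔ z) = (x ⊓ y) ⊔ (x ⊓ z)) ∧
      (∀ x : L, x ⊓ tri x = ⊥ ∧ x ⊔ tri x = ⊤)) ∧
    (∀ (B : Type) [BooleanAlgebra B],
      (∀ x : B, xᶜᶜ ≤ x) ∧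
      (∀ x y : B, x ≤ y → yᶜ ≤ xᶜ) ∧
      (∀ x y : B, (x ⊓ y) ⊔ (x ⊓ yᶜ) = x) ∧
      (∀ x : B, x ≤ xᶜᶜ) ∧
      (∀ x y : B, (x ⊔ y) ⊓ (x ⊔ yᶜ) = x)) := by
  constructor
  · intro L _ _ tri dtri h1 h2 h3 h4 h5 h6 h7
    -- key lemma: (y ⊔ z) ⊓ tri y ≤ z
    have key : ∀ y z : L, (y ⊔ z) ⊓ tri y ≤ z := by
      intro y z
      have h := h6 z y
      rw [← h7] at h
      calc (y ⊔ z) ⊓ tri y ≤ (z ⊔ y) ⊓ (z ⊔ tri y) := by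
            refine le_inf ?_ ?_
            · exact inf_le_left.trans (by rw [sup_comm])
            · exact inf_le_right.trans le_sup_right
        _ = z := h
    constructor
    · intro x y z
      refine le_antisymm ?_ (sup_le (inf_le_inf_left x le_sup_left)
        (inf_le_inf_left x le_sup_right))
      calc x ⊓ (y ⊔ z)
          = (x ⊓ (y ⊔ z) ⊓ y) ⊔ (x ⊓ (y ⊔ z) ⊓ tri y) := (h3 _ y).symm
        _ ≤ (x ⊓ y) ⊔ (x ⊓ z) := by
            refine sup_le_sup ?_ ?_
            · exact le_inf (inf_le_left.trans inf_le_left) inf_le_right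
            · refine le_inf (inf_le_left.trans inf_le_left) ?_
              calc x ⊓ (y ⊔ z) ⊓ tri y ≤ (y ⊔ z) ⊓ tri y :=
                    inf_le_inf_right _ inf_le_right
                _ ≤ z := key y z
    · intro x
      constructor
      · have h := h6 ⊥ x
        rw [← h7] at h
        simpa using h
      · have h := h3 ⊤ x
        simpa using h
  · intro B _
    refine ⟨fun x => (compl_compl x).le, fun x y h => compl_le_compl h,
      fun x y => ?_, fun x => (compl_compl x).ge, fun x y => ?_⟩
    · rw [← inf_sup_left, sup_compl_eq_top, inf_top_eq]
    · rw [← sup_inf_left, inf_compl_eq_bot, sup_bot_eq]
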